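/- Let n_A, n_B be positive integers and let V_AB be a real symmetric (2n_A+2n_B)×(2n_A+2n_B) matrix satisfying the bona fide condition V_AB ≥ iΩ_{n_A+n_B}. Then the following are equivalent: (i) for every integer k ≥ 2, the complex Hermitian matrix V_AB − (iΩ_{n_A} ⊕ (−(1−2/k)·i·Ω_{n_B})) is positive semidefinite; (ii) the complex Hermitian matrix V_AB − (iΩ_{n_A} ⊕ (−i·Ω_{n_B})) is positive semidefinite (i.e., the corresponding Gaussian state is PPT). -/

import Mathlib

open Matrix Complex ComplexOrder

/-- The standard symplectic form on `n` modes: block-diagonal with `n` blocks `[[0,1],[-1,0]]`. -/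
noncomputable def OmegaM (n : ℕ) : Matrix (Fin (2*n)) (Fin (2*n)) ℝ :=
  Matrix.of fun i j =>
    if i.val + 1 = j.val ∧ i.val % 2 = 0 then (1 : ℝ)
    else if j.val + 1 = i.val ∧ j.val % 2 = 0 then -1 else 0

/-- Complexification of a real matrix. -/
noncomputable def cplx {m p : Type*} (M : Matrix m p ℝ) : Matrix m p ℂ :=
  M.map (fun x => (x : ℂ))

lemma OmegaM_transpose (n : ℕ) : (OmegaM n)ᵀ = -(OmegaM n) := by
  ext i j
  simp only [OmegaM, transpose_apply, of_apply, neg_apply]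
  by_cases h1 : j.val + 1 = i.val ∧ j.val % 2 = 0 <;>
    by_cases h2 : i.val + 1 = j.val ∧ i.val % 2 = 0 <;>
    simp [h1, h2] <;> omega

lemma herm_smul_Omega (n : ℕ) (c : ℂ) (hc : star c = -c) :
    (c • cplx (OmegaM n)).IsHermitian := by
  unfold Matrix.IsHermitian
  ext i j
  have hΩ : OmegaM n j i = -OmegaM n i j := by
    have := congrFun (congrFun (OmegaM_transpose n) i) j
    simpa using this
  simp only [conjTranspose_apply, Matrix.smul_apply, cplx, Matrix.map_apply, smul_eq_mul,
    star_mul', hΩ]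
  rw [hc]
  have : star ((-OmegaM n i j : ℝ) : ℂ) = ((-OmegaM n i j : ℝ) : ℂ) := by
    simp [Complex.star_def, Complex.conj_ofReal]
  rw [this]
  push_cast
  ring

lemma herm_form_real {n : Type*} [Fintype n] {H : Matrix n n ℂ} (hH : H.IsHermitian)
    (x : n → ℂ) : star (star x ⬝ᵥ H *ᵥ x) = star x ⬝ᵥ H *ᵥ x := by
  rw [← star_dotProduct_star, star_star, star_mulVec, ← dotProduct_mulVec, hH.eq]

/-- The simplified `k`-extendibility condition holds for all `k ≥ 2` if and only if
the state is PPT, i.e. `V_AB ≥ iΩ_A ⊕ (−iΩ_B)`. -/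
theorem simplified_all_k_iff_PPT
    (nA nB : ℕ) (hnA : 0 < nA) (hnB : 0 < nB)
    (V : Matrix (Fin (2*nA) ⊕ Fin (2*nB)) (Fin (2*nA) ⊕ Fin (2*nB)) ℝ)
    (hV : V.IsSymm)
    (hbona : (cplx V -
      Complex.I • cplx (Matrix.fromBlocks (OmegaM nA) 0 0 (OmegaM nB))).PosSemidef) :
    (∀ k : ℕ, 2 ≤ k →
      (cplx V -
        Matrix.fromBlocks (Complex.I • cplx (OmegaM nA)) 0 0
          ((-(1 - 2/(k:ℂ)) * Complex.I) • cplx (OmegaM nB))).PosSemidef)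
    ↔
    (cplx V -
      Matrix.fromBlocks (Complex.I • cplx (OmegaM nA)) 0 0
        ((-Complex.I) • cplx (OmegaM nB))).PosSemidef := by
  set A : Matrix (Fin (2*nA)) (Fin (2*nA)) ℂ := Complex.I • cplx (OmegaM nA) with hAdef
  set B : Matrix (Fin (2*nB)) (Fin (2*nB)) ℂ := Complex.I • cplx (OmegaM nB) with hBdef
  have hVH : (cplx V).IsHermitian := by
    unfold Matrix.IsHermitian
    ext i j
    have := congrFun (congrFun hV.eq j) i
    simp only [transpose_apply] at this
    simp [cplx, conjTranspose_apply, Matrix.map_apply, Complex.star_def,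
      Complex.conj_ofReal, this]
  have hAH : A.IsHermitian := herm_smul_Omega nA _ (by simp)
  have hBH : B.IsHermitian := herm_smul_Omega nB _ (by simp)
  have hBonaEq : Complex.I • cplx (Matrix.fromBlocks (OmegaM nA) 0 0 (OmegaM nB)) =
      Matrix.fromBlocks A 0 0 B := by
    ext i j
    rcases i with i | i <;> rcases j with j | j <;>
      simp [cplx, Matrix.fromBlocks, hAdef, hBdef]
  rw [hBonaEq] at hbona
  set Bona : Matrix _ _ ℂ := cplx V - Matrix.fromBlocks A 0 0 B with hBonadef
  set Minf : Matrix _ _ ℂ := cplx V -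
    Matrix.fromBlocks A 0 0 ((-Complex.I) • cplx (OmegaM nB)) with hMinfdef
  have hMinfH : Minf.IsHermitian := by
    refine hVH.sub ?_
    rw [Matrix.isHermitian_fromBlocks_iff]
    exact ⟨hAH, by simp, by simp, herm_smul_Omega nB _ (by simp)⟩
  set F : Matrix _ _ ℂ := Matrix.fromBlocks (0 : Matrix (Fin (2*nA)) (Fin (2*nA)) ℂ) 0 0 B
    with hFdef
  have hFH : F.IsHermitian := by
    rw [Matrix.isHermitian_fromBlocks_iff]
    exact ⟨by simp [Matrix.IsHermitian], by simp, by simp, hBH⟩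
  have hMk : ∀ k : ℕ,
      (cplx V -
        Matrix.fromBlocks (Complex.I • cplx (OmegaM nA)) 0 0
          ((-(1 - 2/(k:ℂ)) * Complex.I) • cplx (OmegaM nB))) =
      Minf - (2/(k:ℂ)) • F := by
    intro k
    ext i j
    rcases i with i | i <;> rcases j with j | j <;>
      simp [cplx, Matrix.fromBlocks, hAdef, hBdef, hMinfdef, hFdef, Matrix.sub_apply] <;> ring
  have hComb : ∀ k : ℕ,
      (cplx V -
        Matrix.fromBlocks (Complex.I • cplx (OmegaM nA)) 0 0
          ((-(1 - 2/(k:ℂ)) * Complex.I) • cplx (OmegaM nB))) =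
      (1/(k:ℂ)) • Bona + (1 - 1/(k:ℂ)) • Minf := by
    intro k
    ext i j
    rcases i with i | i <;> rcases j with j | j <;>
      simp [cplx, Matrix.fromBlocks, hAdef, hBdef, hMinfdef, hBonadef, Matrix.sub_apply] <;> ring
  constructor
  · -- forward direction
    intro h
    refine .of_dotProduct_mulVec_nonneg hMinfH fun x => ?_
    set qinf := star x ⬝ᵥ Minf *ᵥ x with hqinf
    set qF := star x ⬝ᵥ F *ᵥ x with hqF
    have hqk : ∀ k : ℕ, 2 ≤ k → 0 ≤ qinf - (2/(k:ℂ)) * qF := by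
      intro k hk
      have := (h k hk).dotProduct_mulVec_nonneg x
      rw [hMk k] at this
      simpa [sub_mulVec, dotProduct_sub, smul_mulVec, dotProduct_smul,
        smul_eq_mul] using this
    have hqinfIm : qinf.im = 0 := Complex.conj_eq_iff_im.mp (herm_form_real hMinfH x)
    rw [Complex.le_def]
    refine ⟨?_, by simp [hqinfIm]⟩
    simp only [Complex.zero_re]
    have key : ∀ k : ℕ, 2 ≤ k → (2/(k:ℝ)) * qF.re ≤ qinf.re := by
      intro k hk
      have h0 := hqk k hk
      rw [Complex.le_def] at h0
      have hre := h0.1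
      have h2k : (2/(k:ℂ)) = ((2/(k:ℝ) : ℝ) : ℂ) := by push_cast; ring
      rw [h2k] at hre
      simp only [Complex.zero_re, Complex.sub_re, Complex.mul_re, Complex.ofReal_re,
        Complex.ofReal_im, zero_mul, sub_zero] at hre
      linarith
    have htend : Filter.Tendsto (fun k : ℕ => (2/(k:ℝ)) * qF.re) Filter.atTop (nhds 0) := by
      have h1 : Filter.Tendsto (fun k : ℕ => 1/(k:ℝ)) Filter.atTop (nhds 0) :=
        tendsto_one_div_atTop_nhds_zero_nat
      have := h1.const_mul (2 * qF.re)
      simp only [mul_zero] at this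
      convert this using 2 with k
      ring
    exact le_of_tendsto htend (Filter.eventually_atTop.mpr ⟨2, fun k hk => key k hk⟩)
  · -- backward direction
    intro hPPT k hk
    have hc1 : (0:ℂ) ≤ 1/(k:ℂ) := by
      rw [show (1/(k:ℂ)) = ((1/(k:ℝ) : ℝ) : ℂ) by push_cast; ring, Complex.zero_le_real]
      positivity
    have hc2 : (0:ℂ) ≤ 1 - 1/(k:ℂ) := by
      rw [show (1 - 1/(k:ℂ)) = ((1 - 1/(k:ℝ) : ℝ) : ℂ) by push_cast; ring,
        Complex.zero_le_real]
      have h1 : (1:ℝ) ≤ (k:ℝ) := by exact_mod_cast Nat.one_le_of_lt hk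
      have hk0 : (0:ℝ) < k := by linarith
      rw [sub_nonneg, div_le_one hk0]; linarith
    refine .of_dotProduct_mulVec_nonneg ?_ ?_
    · refine hVH.sub ?_
      rw [Matrix.isHermitian_fromBlocks_iff]
      refine ⟨hAH, by simp, by simp, herm_smul_Omega nB _ ?_⟩
      have : star ((-(1 - 2/(k:ℂ))) * Complex.I) =
          star Complex.I * star (-(1 - 2/(k:ℂ))) := star_mul _ _
      rw [this]
      simp [Complex.star_def, Complex.conj_I, map_sub, map_div₀]
      ring
    · intro x
      rw [hComb k]
      have hq : star x ⬝ᵥ ((1/(k:ℂ)) • Bona + (1 - 1/(k:ℂ)) • Minf) *ᵥ x =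
          (1/(k:ℂ)) * (star x ⬝ᵥ Bona *ᵥ x) + (1 - 1/(k:ℂ)) * (star x ⬝ᵥ Minf *ᵥ x) := by
        simp [add_mulVec, dotProduct_add, smul_mulVec, dotProduct_smul, smul_eq_mul]
      rw [hq]
      exact add_nonneg (mul_nonneg hc1 (hbona.dotProduct_mulVec_nonneg x)) (mul_nonneg hc2 (hPPT.dotProduct_mulVec_nonneg x))
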